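/- Let α ∈ (0,1), let F be a cumulative distribution function satisfying the quantile growth condition at level α with constants b_α > 0 and M_α > 0, and let G be a cumulative distribution function with sup_y |F(y) − G(y)| < M_α. Then |VaR_α(F) − VaR_α(G)| ≤ b_α · sup_y |F(y) − G(y)|. -/

import Mathlib

open Set Filter

/-- A cumulative distribution function: nondecreasing, right-continuous,
tending to `0` at `−∞` and to `1` at `+∞`. -/
def IsCDF (F : ℝ → ℝ) : Prop :=
  Monotone F ∧ (∀ y : ℝ, ContinuousWithinAt F (Set.Ici y) y) ∧
    Filter.Tendsto F Filter.atBot (nhds 0) ∧ Filter.Tendsto F Filter.atTop (nhds 1)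

/-- Value-at-risk at level `α`: `VaR_α(F) = inf{ y : F y ≥ α }`. -/
noncomputable def VaR (α : ℝ) (F : ℝ → ℝ) : ℝ :=
  sInf {y : ℝ | α ≤ F y}

/-- `F` satisfies the quantile growth condition at level `α` with constants
`b, M`: `|F(VaR_α(F) + b·y) − α| ≥ |y|` for all `y ∈ [−M, M]`. -/
def QuantileGrowth (α : ℝ) (F : ℝ → ℝ) (b M : ℝ) : Prop :=
  ∀ y ∈ Set.Icc (-M) M, |y| ≤ |F (VaR α F + b * y) - α|

lemma cdf_nonneg {F : ℝ → ℝ} (hF : IsCDF F) (y : ℝ) : 0 ≤ F y := by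
  refine le_of_tendsto hF.2.2.1 ?_
  filter_upwards [eventually_le_atBot y] with t ht using hF.1 ht

lemma cdf_le_one {F : ℝ → ℝ} (hF : IsCDF F) (y : ℝ) : F y ≤ 1 := by
  refine ge_of_tendsto hF.2.2.2 ?_
  filter_upwards [eventually_ge_atTop y] with t ht using hF.1 ht

lemma cdf_set_nonempty {F : ℝ → ℝ} (hF : IsCDF F) {α : ℝ} (hα : α < 1) :
    {y : ℝ | α ≤ F y}.Nonempty := by
  obtain ⟨y, hy⟩ := (hF.2.2.2.eventually (eventually_gt_nhds hα)).exists
  exact ⟨y, le_of_lt hy⟩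

lemma cdf_set_bddBelow {F : ℝ → ℝ} (hF : IsCDF F) {α : ℝ} (hα : 0 < α) :
    BddBelow {y : ℝ | α ≤ F y} := by
  obtain ⟨m, hm⟩ := eventually_atBot.mp (hF.2.2.1.eventually (eventually_lt_nhds hα))
  refine ⟨m, fun z hz => ?_⟩
  by_contra hc
  push_neg at hc
  exact absurd hz (not_le.mpr (hm z hc.le))

lemma cdf_VaR_mem {F : ℝ → ℝ} (hF : IsCDF F) {α : ℝ} (hα : α ∈ Set.Ioo (0:ℝ) 1) :
    α ≤ F (VaR α F) := by
  have hne := cdf_set_nonempty hF hα.2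
  have hbdd := cdf_set_bddBelow hF hα.1
  by_contra h
  push_neg at h
  have htend : Tendsto F (nhdsWithin (VaR α F) (Ici (VaR α F))) (nhds (F (VaR α F))) :=
    hF.2.1 (VaR α F)
  have hev : ∀ᶠ y in nhdsWithin (VaR α F) (Ici (VaR α F)), F y < α :=
    htend.eventually (eventually_lt_nhds h)
  rw [Filter.eventually_iff, mem_nhdsGE_iff_exists_Ico_subset] at hev
  obtain ⟨u, hu, hIco⟩ := hev
  have hlt : sInf {y : ℝ | α ≤ F y} < u := hu
  obtain ⟨y, hy, hyu⟩ := exists_lt_of_csInf_lt hne hlt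
  have hqy : VaR α F ≤ y := csInf_le hbdd hy
  have : F y < α := hIco ⟨hqy, hyu⟩
  exact absurd hy (not_le.mpr this)

/-- Second VaR bound: under the quantile growth condition,
`|VaR_α(F) − VaR_α(G)| ≤ b_α · sup_y |F(y) − G(y)|` whenever
`sup_y |F(y) − G(y)| < M_α`. -/
theorem VaR_second_bound (α : ℝ) (hα : α ∈ Set.Ioo (0 : ℝ) 1)
    (F : ℝ → ℝ) (hF : IsCDF F)
    (bα Mα : ℝ) (hbα : 0 < bα) (hMα : 0 < Mα)
    (hgrowth : QuantileGrowth α F bα Mα)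
    (G : ℝ → ℝ) (hG : IsCDF G)
    (hclose : (⨆ y : ℝ, |F y - G y|) < Mα) :
    |VaR α F - VaR α G| ≤ bα * ⨆ y : ℝ, |F y - G y| := by
  obtain ⟨hα0, hα1⟩ := hα
  set ε := ⨆ y : ℝ, |F y - G y| with hεdef
  have hbddA : BddAbove (Set.range fun y => |F y - G y|) := by
    refine ⟨2, ?_⟩
    rintro _ ⟨y, rfl⟩
    have h1 := cdf_nonneg hF y; have h2 := cdf_le_one hF y
    have h3 := cdf_nonneg hG y; have h4 := cdf_le_one hG y
    rw [abs_le]; constructor <;> linarith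
  have hpt : ∀ y, |F y - G y| ≤ ε := fun y => le_ciSup hbddA y
  have hε0 : 0 ≤ ε := le_trans (abs_nonneg _) (hpt 0)
  have hFq : α ≤ F (VaR α F) := cdf_VaR_mem hF ⟨hα0, hα1⟩
  have hup : VaR α G ≤ VaR α F + bα * ε := by
    have hg := hgrowth ε ⟨by linarith, hclose.le⟩
    have h1 : α ≤ F (VaR α F + bα * ε) := le_trans hFq (hF.1 (by nlinarith))
    rw [abs_of_nonneg hε0, abs_of_nonneg (by linarith)] at hg
    have h2 : α ≤ G (VaR α F + bα * ε) := by
      have h3 := (abs_sub_le_iff.mp (hpt (VaR α F + bα * ε))).1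
      linarith
    exact csInf_le (cdf_set_bddBelow hG hα0) h2
  have hlow : VaR α F - bα * ε ≤ VaR α G := by
    refine le_csInf (cdf_set_nonempty hG hα1) fun z hz => ?_
    by_contra hzc
    push_neg at hzc
    set ε' := min Mα ((VaR α F - z) / bα) with hε'def
    have hε'ε : ε < ε' := lt_min hclose (by rw [lt_div_iff₀ hbα]; nlinarith)
    have hε'M : ε' ≤ Mα := min_le_left _ _
    have hzle : z ≤ VaR α F - bα * ε' := by
      have h := min_le_right Mα ((VaR α F - z) / bα)
      rw [le_div_iff₀ hbα] at h
      have : ε' * bα ≤ VaR α F - z := h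
      nlinarith
    have hg := hgrowth (-ε') ⟨by linarith, by linarith⟩
    have heq : VaR α F + bα * (-ε') = VaR α F - bα * ε' := by ring
    rw [heq] at hg
    have hFlt : F (VaR α F - bα * ε') < α := by
      by_contra hc
      push_neg at hc
      have h := csInf_le (cdf_set_bddBelow hF hα0) (hc : _ ∈ {y : ℝ | α ≤ F y})
      have : VaR α F ≤ VaR α F - bα * ε' := h
      nlinarith
    rw [abs_of_nonpos (by linarith : -ε' ≤ 0),
      abs_of_nonpos (by linarith : F (VaR α F - bα * ε') - α ≤ 0)] at hg
    have hFz : F z ≤ F (VaR α F - bα * ε') := hF.1 hzle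
    have hGz : G z ≤ F z + ε := by
      have h := (abs_sub_le_iff.mp (hpt z)).2
      linarith
    have : α ≤ G z := hz
    linarith
  rw [abs_le]
  constructor <;> linarith
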